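/- Let c > 0, ξ ∈ (0,1), K ≥ 1, 0 < p_1 < ⋯ < p_{K+1} ≤ 1, and z ∈ ℝ^K. For k = 1,…,K define φ_k(v) = c ξ v^(−ξ) 1[p_k ≤ v < p_{k+1}], let φ(v) = Σ_{k=1}^K z_k φ_k(v), and let Φ(v) = ∫_{p_1}^{v} φ(u) du. Then ∫_{[p_1,1]²} φ(v₁) φ(v₂) [ (min{1−v₁, 1−v₂} − (1−v₁)(1−v₂)) / (v₁ v₂) ] dv₁ dv₂ = ∫_{p_1}^{1} Φ(v)² / v² dv. -/

import Mathlib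

open MeasureTheory intervalIntegral Real

private lemma ind_rc (l r x : ℝ) :
    Filter.Tendsto (fun v : ℝ => if l ≤ v ∧ v < r then (1:ℝ) else 0)
      (nhdsWithin x (Set.Ici x)) (nhds (if l ≤ x ∧ x < r then (1:ℝ) else 0)) := by
  have h : ∀ᶠ v in nhdsWithin x (Set.Ici x),
      (if l ≤ v ∧ v < r then (1:ℝ) else 0) = (if l ≤ x ∧ x < r then (1:ℝ) else 0) := by
    rcases lt_or_ge x l with hxl | hlx
    · filter_upwards [(gt_mem_nhds hxl).filter_mono nhdsWithin_le_nhds] with v hv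
      rw [if_neg (fun hc => absurd hc.1 (not_le.2 hv)),
        if_neg (fun hc => absurd hc.1 (not_le.2 hxl))]
    · rcases lt_or_ge x r with hxr | hrx
      · filter_upwards [(gt_mem_nhds hxr).filter_mono nhdsWithin_le_nhds,
          eventually_mem_nhdsWithin] with v hv hv'
        rw [if_pos ⟨hlx.trans hv', hv⟩, if_pos ⟨hlx, hxr⟩]
      · filter_upwards [eventually_mem_nhdsWithin] with v hv
        rw [if_neg (fun hc => absurd hc.2 (not_lt.2 (hrx.trans hv))),
          if_neg (fun hc => absurd hc.2 (not_lt.2 hrx))]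
  exact Filter.Tendsto.congr' (Filter.Eventually.mono h fun v hv => hv.symm) tendsto_const_nhds

private lemma II_of_bdd {f : ℝ → ℝ} (hm : AEStronglyMeasurable f volume)
    {a b C : ℝ} (hC : ∀ x ∈ Set.uIcc a b, |f x| ≤ C) :
    IntervalIntegrable f volume a b := by
  rw [intervalIntegrable_iff]
  refine Measure.integrableOn_of_bounded (M := C) ?_ hm ?_
  · exact (measure_Ioc_lt_top).ne
  · refine (ae_restrict_iff' measurableSet_uIoc).2 (Filter.Eventually.of_forall fun x hx => ?_)
    rw [Real.norm_eq_abs]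
    exact hC x (Set.Ioc_subset_Icc_self hx)

set_option maxHeartbeats 1000000

/-- With `φ_k(v) = c ξ v^(−ξ) 1[p_k ≤ v < p_{k+1}]`,
`φ = Σ_k z_k φ_k` and `Φ(v) = ∫_{p₁}^{v} φ(u) du`, the quadratic form
`∫_{[p₁,1]²} φ(v₁)φ(v₂) (min{1−v₁,1−v₂} − (1−v₁)(1−v₂))/(v₁v₂) dv₁ dv₂`
equals `∫_{p₁}^{1} Φ(v)²/v² dv`. -/
theorem stmt6 (c ξ : ℝ) (K : ℕ) (hc : 0 < c) (hξ0 : 0 < ξ) (hξ1 : ξ < 1) (hK : 1 ≤ K)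
    (p : ℕ → ℝ) (hp0 : 0 < p 1) (hpmono : ∀ k, 1 ≤ k → k ≤ K → p k < p (k + 1))
    (hp1 : p (K + 1) ≤ 1) (z : Fin K → ℝ)
    (φ Φ : ℝ → ℝ)
    (hφ : ∀ v, φ v = ∑ k : Fin K,
      z k * (c * ξ * v ^ (-ξ) * (if p ((k : ℕ) + 1) ≤ v ∧ v < p ((k : ℕ) + 2) then 1 else 0)))
    (hΦ : ∀ v, Φ v = ∫ u in (p 1)..v, φ u) :
    (∫ v₁ in (p 1)..1, ∫ v₂ in (p 1)..1,
        φ v₁ * φ v₂ * ((min (1 - v₁) (1 - v₂) - (1 - v₁) * (1 - v₂)) / (v₁ * v₂)))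
      = ∫ v in (p 1)..1, (Φ v) ^ 2 / v ^ 2 := by
  set a := p 1 with ha_def
  have ha0 : 0 < a := hp0
  -- monotonicity chain
  have hchain : ∀ j, 1 ≤ j → j ≤ K + 1 → a ≤ p j := by
    intro j hj1 hjK
    induction j with
    | zero => omega
    | succ n ih =>
      rcases Nat.lt_or_ge 1 (n+1) with h | h
      · have hn1 : 1 ≤ n := by omega
        exact (ih hn1 (by omega)).trans (hpmono n hn1 (by omega)).le
      · have : n + 1 = 1 := by omega
        rw [this]
  have ha1 : a ≤ 1 := (hchain (K+1) (by omega) le_rfl).trans hp1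
  have hφeq : φ = fun v => ∑ k : Fin K,
      z k * (c * ξ * v ^ (-ξ) * (if p ((k : ℕ) + 1) ≤ v ∧ v < p ((k : ℕ) + 2) then 1 else 0)) :=
    funext hφ
  -- φ vanishes below a
  have hφ0 : ∀ v, v < a → φ v = 0 := by
    intro v hv
    rw [hφ]
    refine Finset.sum_eq_zero fun k _ => ?_
    have : ¬(p ((k : ℕ) + 1) ≤ v ∧ v < p ((k : ℕ) + 2)) := by
      rintro ⟨h1, -⟩
      exact absurd ((hchain ((k:ℕ)+1) (by omega) (by omega)).trans h1) (not_le.2 hv)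
    rw [if_neg this, mul_zero, mul_zero]
  -- measurability of φ
  have measφ : Measurable φ := by
    rw [hφeq]
    refine Finset.measurable_sum _ fun k _ => ?_
    refine Measurable.const_mul (Measurable.mul ?_ ?_) _
    · refine (Measurable.const_mul ?_ _)
      refine measurable_of_continuousOn_compl_singleton 0 ?_
      intro x hx
      exact (Real.continuousAt_rpow_const x (-ξ) (Or.inl hx)).continuousWithinAt
    · exact Measurable.ite (measurableSet_Ico (a := p ((k:ℕ)+1)) (b := p ((k:ℕ)+2)))
        measurable_const measurable_const
  -- global bound on φ
  set Mφ : ℝ := (∑ k : Fin K, |z k|) * (c * ξ * a ^ (-ξ)) with hMφ_def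
  have hφbdd : ∀ v, |φ v| ≤ Mφ := by
    intro v
    rw [hφ]
    refine (Finset.abs_sum_le_sum_abs _ _).trans ?_
    rw [hMφ_def, Finset.sum_mul]
    refine Finset.sum_le_sum fun k _ => ?_
    rw [abs_mul]
    by_cases h : p ((k:ℕ) + 1) ≤ v ∧ v < p ((k:ℕ) + 2)
    · rw [if_pos h, mul_one]
      have hv : a ≤ v := (hchain ((k:ℕ)+1) (by omega) (by omega)).trans h.1
      have hv0 : 0 < v := ha0.trans_le hv
      have hr : v ^ (-ξ) ≤ a ^ (-ξ) := Real.rpow_le_rpow_of_nonpos ha0 hv (neg_nonpos.2 hξ0.le)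
      have h0 : (0:ℝ) ≤ c * ξ * v ^ (-ξ) :=
        mul_nonneg (by positivity) (Real.rpow_nonneg hv0.le _)
      rw [abs_of_nonneg h0]
      have h5 : c * ξ * v ^ (-ξ) ≤ c * ξ * a ^ (-ξ) := by nlinarith [mul_pos hc hξ0]
      nlinarith [abs_nonneg (z k)]
    · rw [if_neg h, mul_zero, abs_zero, mul_zero]
      positivity
  have hMφ0 : 0 ≤ Mφ := (abs_nonneg _).trans (hφbdd 0)
  -- interval integrability of φ
  have IIφ : ∀ u w : ℝ, IntervalIntegrable φ volume u w := fun u w =>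
    II_of_bdd measφ.aestronglyMeasurable (fun x _ => hφbdd x)
  -- right-continuity of φ
  have rcφ : ∀ x : ℝ, 0 < x → ContinuousWithinAt φ (Set.Ioi x) x := by
    intro x hx
    rw [ContinuousWithinAt, hφeq]
    refine tendsto_finset_sum _ fun k _ => ?_
    refine Filter.Tendsto.const_mul _ (Filter.Tendsto.mul ?_ ?_)
    · exact ((continuousAt_const.mul
        (Real.continuousAt_rpow_const x (-ξ) (Or.inl hx.ne'))).continuousWithinAt)
    · exact (ind_rc _ _ x).mono_left (nhdsWithin_mono _ Set.Ioi_subset_Ici_self)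
  -- Φ facts
  have hΦeq : Φ = fun v => ∫ u in a..v, φ u := funext hΦ
  have contΦ : Continuous Φ := by
    rw [hΦeq]; exact intervalIntegral.continuous_primitive (fun u w => IIφ u w) a
  have hΦa : Φ a = 0 := by rw [hΦ]; exact integral_same
  have ΦbddIcc : ∀ v ∈ Set.Icc a 1, |Φ v| ≤ Mφ := by
    intro v hv
    rw [hΦ]
    have h := intervalIntegral.norm_integral_le_of_norm_le_const (C := Mφ) (f := φ)
      (a := a) (b := v) (fun x _ => by rw [Real.norm_eq_abs]; exact hφbdd x)
    rw [Real.norm_eq_abs] at h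
    refine h.trans ?_
    have h1 : |v - a| ≤ 1 := by
      rw [abs_of_nonneg (by linarith [hv.1])]; linarith [hv.2]
    nlinarith
  have dΦ : ∀ x ∈ Set.Ioo a 1, HasDerivWithinAt Φ (φ x) (Set.Ioi x) x := by
    intro x hx
    have h := intervalIntegral.integral_hasDerivWithinAt_right (f := φ) (a := a) (b := x)
      (s := Set.Ici x) (t := Set.Ioi x) (IIφ a x)
      ⟨Set.univ, Filter.univ_mem, measφ.aestronglyMeasurable.restrict⟩
      (rcφ x (ha0.trans hx.1))
    rw [hΦeq]
    exact h.mono Set.Ioi_subset_Ici_self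
  -- ψ := φ * (inv - 1)
  set ψ : ℝ → ℝ := fun u => φ u * (u⁻¹ - 1) with hψ_def
  have measψ : Measurable ψ := measφ.mul (measurable_inv.sub measurable_const)
  set Mψ : ℝ := Mφ * (a⁻¹ + 1) with hMψ_def
  have hψbdd : ∀ v, |ψ v| ≤ Mψ := by
    intro v
    rw [hψ_def]
    by_cases hva : a ≤ v
    · have hv0 : 0 < v := ha0.trans_le hva
      rw [abs_mul, hMψ_def]
      have h1 : |v⁻¹ - 1| ≤ a⁻¹ + 1 := by
        have h2 : v⁻¹ ≤ a⁻¹ := by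
          apply inv_anti₀ ha0 hva
        have h3 : 0 ≤ v⁻¹ := by positivity
        rw [abs_sub_le_iff]; constructor <;> nlinarith [inv_nonneg.2 ha0.le]
      exact mul_le_mul (hφbdd v) h1 (abs_nonneg _) hMφ0
    · simp only [hφ0 v (not_le.1 hva), zero_mul, abs_zero, hMψ_def]
      have : 0 ≤ a⁻¹ + 1 := by positivity
      nlinarith
  have hMψ0 : 0 ≤ Mψ := (abs_nonneg _).trans (hψbdd 0)
  have IIψ : ∀ u w : ℝ, IntervalIntegrable ψ volume u w := fun u w =>
    II_of_bdd measψ.aestronglyMeasurable (fun x _ => hψbdd x)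
  have rcψ : ∀ x : ℝ, 0 < x → ContinuousWithinAt ψ (Set.Ioi x) x := by
    intro x hx
    exact (rcφ x hx).mul (((continuousAt_inv₀ hx.ne').sub continuousAt_const).continuousWithinAt)
  -- H
  set H : ℝ → ℝ := fun v => ∫ u in v..1, ψ u with hH_def
  have Hsplit : ∀ v, H v = (∫ u in a..1, ψ u) - ∫ u in a..v, ψ u := by
    intro v
    rw [hH_def, eq_sub_iff_add_eq, add_comm]
    exact intervalIntegral.integral_add_adjacent_intervals (IIψ a v) (IIψ v 1)
  have contH : Continuous H := by
    rw [show H = fun v => (∫ u in a..1, ψ u) - ∫ u in a..v, ψ u from funext Hsplit]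
    exact continuous_const.sub (intervalIntegral.continuous_primitive (fun u w => IIψ u w) a)
  have H1 : H 1 = 0 := integral_same
  have HbddIcc : ∀ v ∈ Set.Icc a 1, |H v| ≤ Mψ := by
    intro v hv
    rw [hH_def]
    have h := intervalIntegral.norm_integral_le_of_norm_le_const (C := Mψ) (f := ψ)
      (a := v) (b := 1) (fun x _ => by rw [Real.norm_eq_abs]; exact hψbdd x)
    rw [Real.norm_eq_abs] at h
    refine h.trans ?_
    have h1 : |1 - v| ≤ 1 := by
      rw [abs_of_nonneg (by linarith [hv.2])]; linarith [hv.1, ha0]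
    nlinarith
  have dH : ∀ x ∈ Set.Ioo a 1, HasDerivWithinAt H (-ψ x) (Set.Ioi x) x := by
    intro x hx
    rw [show H = fun v => (∫ u in a..1, ψ u) - ∫ u in a..v, ψ u from funext Hsplit]
    have h := intervalIntegral.integral_hasDerivWithinAt_right (f := ψ) (a := a) (b := x)
      (s := Set.Ici x) (t := Set.Ioi x) (IIψ a x)
      ⟨Set.univ, Filter.univ_mem, measψ.aestronglyMeasurable.restrict⟩
      (rcψ x (ha0.trans hx.1))
    exact (h.mono Set.Ioi_subset_Ici_self).const_sub _
  -- bound for inv on [a,1]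
  have hinvb : ∀ x ∈ Set.Icc a 1, |x⁻¹ - 1| ≤ a⁻¹ + 1 := by
    intro x hx
    have hx0 : 0 < x := ha0.trans_le hx.1
    have h2 : x⁻¹ ≤ a⁻¹ := inv_anti₀ ha0 hx.1
    have h3 : 0 ≤ x⁻¹ := by positivity
    rw [abs_sub_le_iff]; constructor <;> nlinarith [inv_nonneg.2 ha0.le]
  ------------------------------------------------------------------
  -- Step B : ∫ φ H = ∫ Φ ψ
  ------------------------------------------------------------------
  have intφH : IntervalIntegrable (fun x => φ x * H x) volume a 1 := by
    refine II_of_bdd (C := Mφ * Mψ) (measφ.mul contH.measurable).aestronglyMeasurable fun x hx => ?_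
    rw [Set.uIcc_of_le ha1] at hx
    show |φ x * H x| ≤ _
    rw [abs_mul]
    exact mul_le_mul (hφbdd x) (HbddIcc x hx) (abs_nonneg _) hMφ0
  have intΦψ : IntervalIntegrable (fun x => Φ x * ψ x) volume a 1 := by
    refine II_of_bdd (C := Mφ * Mψ) (contΦ.measurable.mul measψ).aestronglyMeasurable fun x hx => ?_
    rw [Set.uIcc_of_le ha1] at hx
    show |Φ x * ψ x| ≤ _
    rw [abs_mul]
    exact mul_le_mul (ΦbddIcc x hx) (hψbdd x) (abs_nonneg _) hMφ0
  have stepB : (∫ x in a..1, φ x * H x) = ∫ x in a..1, Φ x * ψ x := by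
    have ftcB : (∫ x in a..1, (φ x * H x + Φ x * (-ψ x)))
        = Φ 1 * H 1 - Φ a * H a := by
      refine intervalIntegral.integral_eq_sub_of_hasDeriv_right_of_le
        (f := fun x => Φ x * H x) ha1
        ((contΦ.mul contH).continuousOn) (fun x hx => (dΦ x hx).mul (dH x hx)) ?_
      refine (intφH.add ?_)
      have : (fun x => Φ x * (-ψ x)) = fun x => -(Φ x * ψ x) := by funext x; ring
      rw [this]
      exact intΦψ.neg
    rw [H1, hΦa, mul_zero, zero_mul, sub_zero] at ftcB
    rw [intervalIntegral.integral_add intφH (by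
      have : (fun x => Φ x * (-ψ x)) = fun x => -(Φ x * ψ x) := by funext x; ring
      rw [this]; exact intΦψ.neg)] at ftcB
    have : (∫ x in a..1, Φ x * (-ψ x)) = -∫ x in a..1, Φ x * ψ x := by
      rw [← intervalIntegral.integral_neg]
      congr 1; funext x; ring
    rw [this] at ftcB
    linarith
  ------------------------------------------------------------------
  -- Step A : RHS = 2 ∫ Φ ψ
  ------------------------------------------------------------------
  have int2Φφ : IntervalIntegrable (fun x => 2 * Φ x * φ x * (1 - x⁻¹)) volume a 1 := by
    refine II_of_bdd ((((contΦ.measurable.const_mul 2).mul measφ).mul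
      (measurable_const.sub measurable_inv))).aestronglyMeasurable
      (C := 2 * Mφ * Mφ * (a⁻¹ + 1)) fun x hx => ?_
    rw [Set.uIcc_of_le ha1] at hx
    have h1 : |1 - x⁻¹| ≤ a⁻¹ + 1 := by
      rw [abs_sub_comm]; exact hinvb x hx
    show |2 * Φ x * φ x * (1 - x⁻¹)| ≤ _
    rw [abs_mul, abs_mul, abs_mul, abs_two]
    have := ΦbddIcc x hx
    have := hφbdd x
    gcongr 2 * ?_ * ?_ * ?_ <;> assumption
  have intΦ2 : IntervalIntegrable (fun x => Φ x ^ 2 * (x ^ 2)⁻¹) volume a 1 := by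
    refine II_of_bdd ((contΦ.measurable.pow_const 2).mul
      ((measurable_id'.pow_const 2).inv)).aestronglyMeasurable
      (C := Mφ ^ 2 * (a ^ 2)⁻¹) fun x hx => ?_
    rw [Set.uIcc_of_le ha1] at hx
    have hx0 : 0 < x := ha0.trans_le hx.1
    show |Φ x ^ 2 * (x ^ 2)⁻¹| ≤ _
    rw [abs_mul, abs_pow, abs_of_nonneg (by positivity : (0:ℝ) ≤ (x ^ 2)⁻¹)]
    have h5 := ΦbddIcc x hx
    have h6 : a ^ 2 ≤ x ^ 2 := pow_le_pow_left₀ ha0.le hx.1 2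
    gcongr <;> assumption
  have stepA : (∫ v in a..1, Φ v ^ 2 * (v ^ 2)⁻¹) = 2 * ∫ x in a..1, Φ x * ψ x := by
    have ftcA : (∫ x in a..1, (2 * Φ x * φ x * (1 - x⁻¹) + Φ x ^ 2 * (x ^ 2)⁻¹))
        = Φ 1 ^ 2 * (1 - (1:ℝ)⁻¹) - Φ a ^ 2 * (1 - a⁻¹) := by
      refine intervalIntegral.integral_eq_sub_of_hasDeriv_right_of_le
        (f := fun v => Φ v ^ 2 * (1 - v⁻¹)) ha1 ?_ ?_ (int2Φφ.add intΦ2)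
      · refine ((contΦ.pow 2).continuousOn.mul (continuousOn_const.sub ?_))
        exact ContinuousOn.inv₀ continuousOn_id fun x hx => (ha0.trans_le hx.1).ne'
      · intro x hx
        have hx0 : 0 < x := ha0.trans_le hx.1.le
        have h1 : HasDerivWithinAt (fun v => Φ v ^ 2) (2 * Φ x * φ x) (Set.Ioi x) x := by
          have := (dΦ x hx).pow 2
          show HasDerivWithinAt (Φ ^ 2) _ _ _
          simpa [pow_one] using this
        have h2 : HasDerivAt (fun v : ℝ => 1 - v⁻¹) ((x ^ 2)⁻¹) x := by
          have := (hasDerivAt_inv hx0.ne').const_sub 1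
          simpa using this
        exact h1.mul h2.hasDerivWithinAt
    rw [hΦa] at ftcA
    simp only [inv_one, sub_self, mul_zero, ne_eq, OfNat.ofNat_ne_zero,
      not_false_eq_true, zero_pow, zero_mul, sub_zero] at ftcA
    rw [intervalIntegral.integral_add int2Φφ intΦ2] at ftcA
    have h4 : (∫ x in a..1, 2 * Φ x * φ x * (1 - x⁻¹)) = -(2 * ∫ x in a..1, Φ x * ψ x) := by
      rw [← intervalIntegral.integral_const_mul, ← intervalIntegral.integral_neg]
      congr 1; funext x
      rw [hψ_def]; ring
    rw [h4] at ftcA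
    linarith
  ------------------------------------------------------------------
  -- Step C : LHS = 2 ∫ Φ ψ
  ------------------------------------------------------------------
  have key : ∀ v₁ ∈ Set.Icc a 1,
      (∫ v₂ in a..1, φ v₁ * φ v₂ *
          ((min (1 - v₁) (1 - v₂) - (1 - v₁) * (1 - v₂)) / (v₁ * v₂)))
        = φ v₁ * (Φ v₁ * (v₁⁻¹ - 1) + H v₁) := by
    intro v₁ hv₁
    have hv₁0 : 0 < v₁ := ha0.trans_le hv₁.1
    have meask : Measurable fun v₂ => φ v₂ * ((max v₁ v₂)⁻¹ - 1) :=
      measφ.mul (((measurable_const.max measurable_id).inv).sub measurable_const)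
    have bddk : ∀ v₂, |φ v₂ * ((max v₁ v₂)⁻¹ - 1)| ≤ Mφ * (a⁻¹ + 1) := by
      intro v₂
      rw [abs_mul]
      have hmax : a ≤ max v₁ v₂ := hv₁.1.trans (le_max_left _ _)
      have hmax0 : 0 < max v₁ v₂ := ha0.trans_le hmax
      have h1 : |(max v₁ v₂)⁻¹ - 1| ≤ a⁻¹ + 1 := by
        have h2 : (max v₁ v₂)⁻¹ ≤ a⁻¹ := inv_anti₀ ha0 hmax
        have h3 : 0 ≤ (max v₁ v₂)⁻¹ := by positivity
        rw [abs_sub_le_iff]; constructor <;> nlinarith [inv_nonneg.2 ha0.le]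
      exact mul_le_mul (hφbdd v₂) h1 (abs_nonneg _) hMφ0
    have IIk : ∀ u w : ℝ,
        IntervalIntegrable (fun v₂ => φ v₂ * ((max v₁ v₂)⁻¹ - 1)) volume u w := fun u w =>
      II_of_bdd meask.aestronglyMeasurable (fun x _ => bddk x)
    have c1 : (∫ v₂ in a..1, φ v₁ * φ v₂ *
          ((min (1 - v₁) (1 - v₂) - (1 - v₁) * (1 - v₂)) / (v₁ * v₂)))
        = ∫ v₂ in a..1, φ v₁ * (φ v₂ * ((max v₁ v₂)⁻¹ - 1)) := by
      refine intervalIntegral.integral_congr fun v₂ hv₂ => ?_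
      rw [Set.uIcc_of_le ha1] at hv₂
      have hv₂0 : 0 < v₂ := ha0.trans_le hv₂.1
      have hker : (min (1 - v₁) (1 - v₂) - (1 - v₁) * (1 - v₂)) / (v₁ * v₂)
          = (max v₁ v₂)⁻¹ - 1 := by
        rcases le_total v₁ v₂ with h | h
        · rw [min_eq_right (by linarith), max_eq_right h]
          field_simp
          ring
        · rw [min_eq_left (by linarith), max_eq_left h]
          field_simp
          ring
      rw [hker]; ring
    rw [c1, intervalIntegral.integral_const_mul]
    congr 1
    rw [← intervalIntegral.integral_add_adjacent_intervals (IIk a v₁) (IIk v₁ 1)]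
    congr 1
    · have c4 : (∫ v₂ in a..v₁, φ v₂ * ((max v₁ v₂)⁻¹ - 1))
          = ∫ v₂ in a..v₁, φ v₂ * (v₁⁻¹ - 1) := by
        refine intervalIntegral.integral_congr fun v₂ hv₂ => ?_
        rw [Set.uIcc_of_le hv₁.1] at hv₂
        rw [max_eq_left hv₂.2]
      rw [c4, intervalIntegral.integral_mul_const, hΦ v₁]
    · have c5 : (∫ v₂ in v₁..1, φ v₂ * ((max v₁ v₂)⁻¹ - 1))
          = ∫ v₂ in v₁..1, ψ v₂ := by
        refine intervalIntegral.integral_congr fun v₂ hv₂ => ?_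
        rw [Set.uIcc_of_le hv₁.2] at hv₂
        rw [hψ_def, max_eq_right hv₂.1]
      rw [c5, hH_def]
  -- assemble
  have lhs_eq : (∫ v₁ in a..1, ∫ v₂ in a..1,
        φ v₁ * φ v₂ * ((min (1 - v₁) (1 - v₂) - (1 - v₁) * (1 - v₂)) / (v₁ * v₂)))
      = 2 * ∫ x in a..1, Φ x * ψ x := by
    have e1 : (∫ v₁ in a..1, ∫ v₂ in a..1,
          φ v₁ * φ v₂ * ((min (1 - v₁) (1 - v₂) - (1 - v₁) * (1 - v₂)) / (v₁ * v₂)))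
        = ∫ v₁ in a..1, (Φ v₁ * ψ v₁ + φ v₁ * H v₁) := by
      refine intervalIntegral.integral_congr fun v₁ hv₁ => ?_
      rw [Set.uIcc_of_le ha1] at hv₁
      rw [key v₁ hv₁, hψ_def]
      ring
    rw [e1, intervalIntegral.integral_add intΦψ intφH, stepB]
    ring
  have rhs_eq : (∫ v in a..1, Φ v ^ 2 / v ^ 2) = 2 * ∫ x in a..1, Φ x * ψ x := by
    simp only [div_eq_mul_inv]
    exact stepA
  rw [lhs_eq, rhs_eq]
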